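/- (Corollary 1, Cramér–von Mises version.) Let r be a probability measure on a measurable parameter space Θ and D ⊆ Θ a measurable set with w := r(D) > 0 (Assumption 1). For each n ∈ ℕ, let κ_n be a Markov kernel from Θ to [0,1] such that κ_n(θ) is the uniform distribution on [0,1] for every θ ∉ D, and for every θ ∈ D and every ε > 0, κ_n(θ)([0,ε]) → 1 as n → ∞. For B, n ∈ ℕ, let θ_1,…,θ_B be i.i.d. with law r and, conditionally on them, let p_1,…,p_B be independent with p_i ∼ κ_n(θ_i); let W_{B,n} = ∫₀¹ (F̂_B(t) − t)² dt be the Cramér–von Mises statistic of the p-values, and let c_B(α) be the (1−α)-quantile of the CvM statistic computed from B i.i.d. Unif[0,1] variables. Then for every α ∈ (0,1) and all sequences B_k → ∞ and n_k → ∞, P(W_{B_k,n_k} > c_{B_k}(α)) → 1 as k → ∞; that is, the α-level global goodness-of-fit test based on the Cramér–von Mises statistic is statistically consistent. -/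

import Mathlib

open MeasureTheory Filter
open scoped ENNReal Classical

/-- Empirical cumulative distribution function of the first `B` of the random
variables `X` evaluated at the sample point `ω` and the argument `t`:
`F̂_B(t) = (1/B) · #{ i < B : X i ω ≤ t }`. -/
noncomputable def ecdf {Ω : Type*} (X : ℕ → Ω → ℝ) (B : ℕ) (ω : Ω) (t : ℝ) : ℝ :=
  ((Finset.range B).filter (fun i => X i ω ≤ t)).card / B

/-- The Cramér–von Mises statistic against the uniform distribution on `[0,1]`
computed from the first `B` of the random variables `X`:
`W_B = ∫₀¹ (F̂_B(t) - t)² dt`. -/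
noncomputable def cvmStat {Ω : Type*} (X : ℕ → Ω → ℝ) (B : ℕ) (ω : Ω) : ℝ :=
  ∫ t in (0 : ℝ)..1, (ecdf X B ω t - t) ^ 2

section basic
variable {Ω : Type*} (X : ℕ → Ω → ℝ) (B : ℕ) (ω : Ω)

lemma ecdf_nonneg (t : ℝ) : 0 ≤ ecdf X B ω t := by
  unfold ecdf; positivity

lemma ecdf_le_one (t : ℝ) : ecdf X B ω t ≤ 1 := by
  unfold ecdf
  rcases Nat.eq_zero_or_pos B with h | h
  · simp [h]
  · rw [div_le_one (by exact_mod_cast h)]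
    calc ((Finset.filter (fun i => X i ω ≤ t) (Finset.range B)).card : ℝ)
        ≤ ((Finset.range B).card : ℝ) := by exact_mod_cast Finset.card_filter_le _ _
      _ = B := by simp

lemma ecdf_mono : Monotone (ecdf X B ω) := by
  intro s t hst
  unfold ecdf
  rcases Nat.eq_zero_or_pos B with h | h
  · simp [h]
  · have : ((Finset.range B).filter (fun i => X i ω ≤ s)).card
        ≤ ((Finset.range B).filter (fun i => X i ω ≤ t)).card :=
      Finset.card_le_card (Finset.monotone_filter_right _ (fun i _ hi => le_trans hi hst))
    have h2 : (((Finset.range B).filter (fun i => X i ω ≤ s)).card : ℝ)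
        ≤ (((Finset.range B).filter (fun i => X i ω ≤ t)).card : ℝ) := by exact_mod_cast this
    gcongr

lemma ecdf_eq_sum (t : ℝ) :
    ecdf X B ω t = (∑ i ∈ Finset.range B, if X i ω ≤ t then (1:ℝ) else 0) / B := by
  unfold ecdf
  congr 1
  rw [Finset.card_filter]
  push_cast
  rfl

lemma measurable_ecdf {Ω : Type*} [MeasurableSpace Ω] {X : ℕ → Ω → ℝ}
    (hX : ∀ i, Measurable (X i)) (B : ℕ) (t : ℝ) :
    Measurable fun ω => ecdf X B ω t := by
  have : (fun ω => ecdf X B ω t)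
      = fun ω => (∑ i ∈ Finset.range B, if X i ω ≤ t then (1:ℝ) else 0) / B :=
    funext fun ω => ecdf_eq_sum X B ω t
  rw [this]
  apply Measurable.div_const
  apply Finset.measurable_sum
  intro i _
  exact Measurable.ite (measurableSet_le (hX i) measurable_const)
    measurable_const measurable_const

lemma cvm_integrand_intervalIntegrable (X : ℕ → Ω → ℝ) (B : ℕ) (ω : Ω) :
    IntervalIntegrable (fun t => (ecdf X B ω t - t) ^ 2) volume 0 1 := by
  rw [intervalIntegrable_iff_integrableOn_Ioc_of_le zero_le_one]
  have hmeas : Measurable fun t => (ecdf X B ω t - t) ^ 2 :=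
    (((ecdf_mono X B ω).measurable).sub measurable_id).pow_const 2
  have : IsFiniteMeasure (volume.restrict (Set.Ioc (0:ℝ) 1)) :=
    ⟨by simp [Measure.restrict_apply_univ]⟩
  refine memLp_one_iff_integrable.1 (MemLp.of_bound hmeas.aestronglyMeasurable 1 ?_)
  filter_upwards [ae_restrict_mem measurableSet_Ioc] with t ht
  have h0 := ecdf_nonneg X B ω t
  have h1 := ecdf_le_one X B ω t
  have : |ecdf X B ω t - t| ≤ 1 := by
    rw [abs_le]; constructor <;> [nlinarith [ht.1.le, ht.2]; nlinarith [ht.1.le, ht.2]]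
  calc ‖(ecdf X B ω t - t) ^ 2‖ = |ecdf X B ω t - t| ^ 2 := by
        rw [Real.norm_eq_abs, abs_pow]
    _ ≤ 1 ^ 2 := by gcongr
    _ = 1 := one_pow 2

lemma cvmStat_nonneg (X : ℕ → Ω → ℝ) (B : ℕ) (ω : Ω) : 0 ≤ cvmStat X B ω := by
  unfold cvmStat
  apply intervalIntegral.integral_nonneg zero_le_one
  intro t _; positivity

lemma cvm_lower (X : ℕ → Ω → ℝ) (B : ℕ) (ω : Ω) {ε δ : ℝ} (hε : 0 ≤ ε) (hδ : 0 < δ)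
    (h1 : ε + δ ≤ 1) (h : ε + δ ≤ ecdf X B ω ε) : δ ^ 3 / 8 ≤ cvmStat X B ω := by
  set f : ℝ → ℝ := fun t => (ecdf X B ω t - t) ^ 2 with hf
  have hint : IntervalIntegrable f volume 0 1 := cvm_integrand_intervalIntegrable X B ω
  set a := ε
  set b := ε + δ / 2 with hb
  have hab : a ≤ b := by simp [hb]; linarith
  have hb1 : b ≤ 1 := by simp [hb]; linarith
  have hsub1 : IntervalIntegrable f volume 0 a := by
    apply hint.mono_set
    rw [Set.uIcc_of_le hε, Set.uIcc_of_le zero_le_one]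
    exact Set.Icc_subset_Icc le_rfl (by linarith)
  have hsub2 : IntervalIntegrable f volume a b := by
    apply hint.mono_set
    rw [Set.uIcc_of_le hab, Set.uIcc_of_le zero_le_one]
    exact Set.Icc_subset_Icc hε hb1
  have hsub3 : IntervalIntegrable f volume b 1 := by
    apply hint.mono_set
    rw [Set.uIcc_of_le hb1, Set.uIcc_of_le zero_le_one]
    exact Set.Icc_subset_Icc (by linarith) le_rfl
  have hsplit : cvmStat X B ω = (∫ t in (0:ℝ)..a, f t) + (∫ t in a..b, f t)
      + (∫ t in b..1, f t) := by
    unfold cvmStat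
    rw [← intervalIntegral.integral_add_adjacent_intervals (hsub1.trans hsub2) hsub3,
      ← intervalIntegral.integral_add_adjacent_intervals hsub1 hsub2]
  have h01 : (0:ℝ) ≤ ∫ t in (0:ℝ)..a, f t :=
    intervalIntegral.integral_nonneg hε (fun t _ => by positivity)
  have h03 : (0:ℝ) ≤ ∫ t in b..1, f t :=
    intervalIntegral.integral_nonneg hb1 (fun t _ => by positivity)
  have hmid : δ ^ 3 / 8 ≤ ∫ t in a..b, f t := by
    have hconst : (∫ t in a..b, (δ / 2) ^ 2) = (δ/2)^2 * (b - a) := by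
      rw [intervalIntegral.integral_const, smul_eq_mul]; ring
    have hle : (∫ t in a..b, (δ / 2) ^ 2) ≤ ∫ t in a..b, f t := by
      apply intervalIntegral.integral_mono_on hab intervalIntegrable_const hsub2
      intro t ht
      have h2 : ε + δ ≤ ecdf X B ω t := le_trans h (ecdf_mono X B ω ht.1)
      have h3 : δ / 2 ≤ ecdf X B ω t - t := by
        have := ht.2; simp only [hb] at this; linarith
      calc (δ/2)^2 ≤ (ecdf X B ω t - t)^2 := by
            apply pow_le_pow_left₀ (by positivity) h3
        _ = f t := rfl
    calc δ ^ 3 / 8 = (δ/2)^2 * (b - a) := by simp [hb]; ring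
      _ ≤ ∫ t in a..b, f t := hconst ▸ hle
  rw [hsplit]; linarith

lemma cvm_upper (X : ℕ → Ω → ℝ) (B : ℕ) (ω : Ω) {m : ℕ} (hm : 0 < m) {η : ℝ} (hη : 0 ≤ η)
    (h : ∀ j ≤ m, |ecdf X B ω ((j:ℝ)/m) - (j:ℝ)/m| ≤ η) :
    cvmStat X B ω ≤ (η + 1/m) ^ 2 := by
  have hm' : (0:ℝ) < m := by exact_mod_cast hm
  have key : ∀ t ∈ Set.Icc (0:ℝ) 1, |ecdf X B ω t - t| ≤ η + 1/m := by
    intro t ht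
    obtain ⟨ht0, ht1⟩ := ht
    set j : ℕ := ⌊t * m⌋.toNat with hj
    have hfl : (0:ℤ) ≤ ⌊t * m⌋ := Int.floor_nonneg.2 (by positivity)
    have hcst : ((j:ℤ):ℝ) = ((⌊t * m⌋ : ℤ):ℝ) := by
      rw [hj]; exact_mod_cast congrArg (fun z : ℤ => (z:ℝ)) (Int.toNat_of_nonneg hfl)
    have hjle : (j:ℝ) ≤ t * m := by
      have := Int.floor_le (t * m)
      push_cast at hcst ⊢
      rw [hcst]; exact this
    have hjlt : t * m < (j:ℝ) + 1 := by
      have := Int.lt_floor_add_one (t * m)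
      push_cast at hcst ⊢
      rw [hcst]; exact this
    have hjm : j ≤ m := by
      by_contra hc
      push_neg at hc
      have : (m:ℝ) + 1 ≤ (j:ℝ) := by exact_mod_cast hc
      nlinarith
    rcases eq_or_lt_of_le hjm with heq | hlt
    ·
      have ht1' : t = 1 := by
        have : (m:ℝ) ≤ t * m := by rw [← heq] at hjle ⊢; exact hjle
        nlinarith
      have := h m le_rfl
      rw [div_self hm'.ne'] at this
      rw [ht1']
      calc |ecdf X B ω 1 - 1| ≤ η := this
        _ ≤ η + 1/m := le_add_of_nonneg_right (by positivity)
    · have hj1 : j + 1 ≤ m := hlt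
      have hlo := h j hjm
      have hhi := h (j+1) hj1
      have hgl : (j:ℝ)/m ≤ t := by rw [div_le_iff₀ hm']; linarith
      have hgu : t ≤ ((j:ℝ)+1)/m := by rw [le_div_iff₀ hm']; linarith
      have e1 : ecdf X B ω t ≤ ecdf X B ω (((j:ℝ)+1)/m) := by
        have := ecdf_mono X B ω hgu
        simpa using this
      have e2 : ecdf X B ω ((j:ℝ)/m) ≤ ecdf X B ω t := ecdf_mono X B ω hgl
      rw [abs_le] at hlo hhi ⊢
      have hcast : ((j+1 : ℕ):ℝ) = (j:ℝ)+1 := by push_cast; ring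
      rw [hcast] at hhi
      constructor
      · -- -(η+1/m) ≤ ecdf t - t
        have : (j:ℝ)/m - η ≤ ecdf X B ω ((j:ℝ)/m) := by linarith [hlo.1]
        have h4 : ((j:ℝ)+1)/m - (j:ℝ)/m = 1/m := by field_simp; ring
        nlinarith [e2, hgu]
      · have : ecdf X B ω (((j:ℝ)+1)/m) ≤ ((j:ℝ)+1)/m + η := by linarith [hhi.2]
        have h4 : ((j:ℝ)+1)/m - (j:ℝ)/m = 1/m := by field_simp; ring
        nlinarith [e1, hgl]
  unfold cvmStat
  have hconst : (∫ _ in (0:ℝ)..1, (η + 1/m)^2) = (η + 1/m)^2 := by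
    rw [intervalIntegral.integral_const, smul_eq_mul]; ring
  rw [← hconst]
  apply intervalIntegral.integral_mono_on zero_le_one
    (cvm_integrand_intervalIntegrable X B ω) intervalIntegrable_const
  intro t ht
  have := key t ht
  calc (ecdf X B ω t - t)^2 = |ecdf X B ω t - t|^2 := by rw [sq_abs]
    _ ≤ (η + 1/m)^2 := by apply pow_le_pow_left₀ (abs_nonneg _) this

end basic

open ProbabilityTheory in
lemma ecdf_chebyshev {Ω : Type*} [MeasurableSpace Ω] {μ : Measure Ω} [IsProbabilityMeasure μ]
    {X : ℕ → Ω → ℝ} (hX : ∀ i, Measurable (X i))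
    (hindep : iIndepFun X μ)
    {B : ℕ} (hB : 0 < B) (t : ℝ) {q : ℝ} (hq : ∀ i, (μ {ω | X i ω ≤ t}).toReal = q)
    {η : ℝ} (hη : 0 < η) :
    μ {ω | η ≤ |ecdf X B ω t - q|} ≤ ENNReal.ofReal (1 / (4 * B * η ^ 2)) := by
  classical
  set φ : ℝ → ℝ := fun x => if x ≤ t then 1 else 0 with hφ
  have hφm : Measurable φ :=
    Measurable.ite measurableSet_Iic measurable_const measurable_const
  set Y : ℕ → Ω → ℝ := fun i ω => φ (X i ω) with hY
  have hYm : ∀ i, Measurable (Y i) := fun i => hφm.comp (hX i)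
  have hYind : iIndepFun Y μ :=
    hindep.comp (fun _ => φ) (fun _ => hφm)
  have hYbd : ∀ i ω, Y i ω = if X i ω ≤ t then (1:ℝ) else 0 := fun i ω => rfl
  have hY2 : ∀ i, MemLp (Y i) 2 μ := by
    intro i
    apply MemLp.of_bound (hYm i).aestronglyMeasurable 1
    filter_upwards with ω
    rw [hYbd]; split_ifs <;> simp
  have hYint : ∀ i, μ[Y i] = q := by
    intro i
    have : Y i = Set.indicator (X i ⁻¹' Set.Iic t) (fun _ => (1:ℝ)) := by
      funext ω
      simp [hYbd, Set.indicator_apply, Set.mem_preimage, Set.mem_Iic]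
    rw [this, integral_indicator_const _ ((hX i) measurableSet_Iic)]
    have : X i ⁻¹' Set.Iic t = {ω | X i ω ≤ t} := rfl
    rw [this, measureReal_def, hq i, smul_eq_mul, mul_one]
  have hYsq : ∀ i, (fun ω => Y i ω ^ 2) = Y i := by
    intro i; funext ω; rw [hYbd]; split_ifs <;> simp
  have hYvar : ∀ i, variance (Y i) μ ≤ 1/4 := by
    intro i
    rw [variance_eq_sub (hY2 i)]
    have h1 : μ[(Y i) ^ 2] = q := by
      rw [← hYint i]
      congr 1
      funext ω
      simp only [Pi.pow_apply]
      rw [hYbd i ω]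
      split_ifs <;> norm_num
    rw [h1, hYint i]
    nlinarith [sq_nonneg (q - 1/2)]
  set S : Ω → ℝ := ∑ i ∈ Finset.range B, Y i with hS
  have hS2 : MemLp S 2 μ := memLp_finset_sum' _ (fun i _ => hY2 i)
  have hSvar : variance S μ ≤ B / 4 := by
    rw [IndepFun.variance_sum (fun i _ => hY2 i)
      (fun i _ j _ hij => hYind.indepFun hij)]
    calc ∑ i ∈ Finset.range B, variance (Y i) μ ≤ ∑ _i ∈ Finset.range B, (1/4 : ℝ) :=
          Finset.sum_le_sum (fun i _ => hYvar i)
      _ = B / 4 := by simp; ring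
  have hSmean : μ[S] = B * q := by
    have : ∫ ω, S ω ∂μ = ∫ ω, (∑ i ∈ Finset.range B, Y i ω) ∂μ := by
      congr 1; funext ω; simp [hS, Finset.sum_apply]
    rw [this, integral_finset_sum _ (fun i _ => (hY2 i).integrable one_le_two)]
    simp [hYint]
  have hBpos : (0:ℝ) < B := by exact_mod_cast hB
  have hset : {ω | η ≤ |ecdf X B ω t - q|} = {ω | B * η ≤ |S ω - μ[S]|} := by
    ext ω
    simp only [Set.mem_setOf_eq, hSmean]
    have hecdf : ecdf X B ω t = S ω / B := by
      rw [ecdf_eq_sum]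
      congr 1
      simp [hS, hY, hφ, Finset.sum_apply]
    rw [hecdf]
    have : S ω / B - q = (S ω - B * q) / B := by field_simp
    rw [this, abs_div, abs_of_pos hBpos, le_div_iff₀ hBpos]
    constructor <;> intro h <;> linarith
  rw [hset]
  calc μ {ω | B * η ≤ |S ω - μ[S]|}
      ≤ ENNReal.ofReal (variance S μ / (B * η) ^ 2) :=
        meas_ge_le_variance_div_sq hS2 (by positivity)
    _ ≤ ENNReal.ofReal (1 / (4 * B * η ^ 2)) := by
        apply ENNReal.ofReal_le_ofReal
        rw [div_le_div_iff₀ (by positivity) (by positivity)]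
        calc variance S μ * (4 * B * η ^ 2) ≤ (B / 4) * (4 * B * η ^ 2) := by
              apply mul_le_mul_of_nonneg_right hSvar (by positivity)
          _ = 1 * (B * η) ^ 2 := by ring

lemma unif_cdf {Ω' : Type*} [MeasurableSpace Ω'] {μ' : Measure Ω'}
    {U : ℕ → Ω' → ℝ} (hUmeas : ∀ i, Measurable (U i))
    (hUlaw : ∀ i, μ'.map (U i) = volume.restrict (Set.Icc (0 : ℝ) 1))
    {s : ℝ} (hs0 : 0 ≤ s) (hs1 : s ≤ 1) (i : ℕ) :
    (μ' {ω | U i ω ≤ s}).toReal = s := by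
  have h1 : {ω | U i ω ≤ s} = U i ⁻¹' Set.Iic s := rfl
  have h2 : μ' (U i ⁻¹' Set.Iic s) = (μ'.map (U i)) (Set.Iic s) :=
    (Measure.map_apply (hUmeas i) measurableSet_Iic).symm
  rw [h1, h2, hUlaw i, Measure.restrict_apply measurableSet_Iic]
  have h3 : Set.Iic s ∩ Set.Icc 0 1 = Set.Icc 0 s := by
    ext x
    simp only [Set.mem_inter_iff, Set.mem_Iic, Set.mem_Icc]
    constructor
    · rintro ⟨h, h0, _⟩; exact ⟨h0, h⟩
    · rintro ⟨h0, h⟩; exact ⟨h, h0, by linarith⟩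
  rw [h3, Real.volume_Icc, ENNReal.toReal_ofReal (by linarith)]
  ring

open ProbabilityTheory in
lemma quantile_small {Ω' : Type*} [MeasurableSpace Ω'] {μ' : Measure Ω'} [IsProbabilityMeasure μ']
    {U : ℕ → Ω' → ℝ} (hUmeas : ∀ i, Measurable (U i))
    (hUindep : iIndepFun U μ')
    (hUlaw : ∀ i, μ'.map (U i) = volume.restrict (Set.Icc (0 : ℝ) 1))
    {α : ℝ} (hα : α ∈ Set.Ioo (0:ℝ) 1) {t₀ : ℝ} (ht₀ : 0 < t₀) :
    ∃ B₀ : ℕ, ∀ B ≥ B₀,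
      sInf {t : ℝ | 1 - α ≤ (μ' {ω' | cvmStat U B ω' ≤ t}).toReal} ≤ t₀ := by
  classical
  set σ := Real.sqrt t₀ with hσdef
  have hσ : 0 < σ := Real.sqrt_pos.2 ht₀
  set m : ℕ := ⌈2/σ⌉₊ + 1 with hmdef
  have hm : 0 < m := Nat.succ_pos _
  have hm' : (0:ℝ) < m := by exact_mod_cast hm
  have h2σ : 2/σ ≤ (m:ℝ) := by
    calc 2/σ ≤ (⌈2/σ⌉₊ : ℝ) := Nat.le_ceil _
      _ ≤ m := by exact_mod_cast Nat.le_succ _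
  have h1m : 1/(m:ℝ) ≤ σ/2 := by
    rw [div_le_div_iff₀ hm' two_pos]
    rw [div_le_iff₀ hσ] at h2σ
    nlinarith
  set η : ℝ := σ/2 with hηdef
  have hη : 0 < η := by positivity
  set B₀ : ℕ := ⌈((m:ℝ)+1)/(4*η^2*α)⌉₊ + 1 with hB₀def
  refine ⟨B₀, fun B hB => ?_⟩
  have hB1 : 0 < B := lt_of_lt_of_le (Nat.succ_pos _) hB
  have hB1' : (0:ℝ) < B := by exact_mod_cast hB1
  have hBbig : ((m:ℝ)+1)/(4*η^2*α) ≤ (B:ℝ) := by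
    calc ((m:ℝ)+1)/(4*η^2*α) ≤ (⌈((m:ℝ)+1)/(4*η^2*α)⌉₊ : ℝ) := Nat.le_ceil _
      _ ≤ (B₀:ℝ) := Nat.cast_le.2 (Nat.le_succ _)
      _ ≤ (B:ℝ) := by exact_mod_cast hB
  -- bad events
  set bad : ℕ → Set Ω' := fun j => {ω' | η ≤ |ecdf U B ω' ((j:ℝ)/m) - (j:ℝ)/m|} with hbaddef
  have hbadmeas : ∀ j, MeasurableSet (bad j) := by
    intro j
    exact measurableSet_le measurable_const
      (((measurable_ecdf hUmeas B ((j:ℝ)/m)).sub measurable_const).abs)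
  have hbadle : ∀ j ≤ m, μ' (bad j) ≤ ENNReal.ofReal (1/(4*B*η^2)) := by
    intro j hj
    apply ecdf_chebyshev hUmeas hUindep hB1 ((j:ℝ)/m) ?_ hη
    intro i
    apply unif_cdf hUmeas hUlaw ?_ ?_ i
    · positivity
    · rw [div_le_one hm']; exact_mod_cast hj
  set badU : Set Ω' := ⋃ j ∈ Finset.range (m+1), bad j with hbadUdef
  have hbadUmeas : MeasurableSet badU :=
    Finset.measurableSet_biUnion _ (fun j _ => hbadmeas j)
  have hbadUle : μ' badU ≤ ENNReal.ofReal (((m:ℝ)+1) * (1/(4*B*η^2))) := by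
    calc μ' badU ≤ ∑ j ∈ Finset.range (m+1), μ' (bad j) :=
          measure_biUnion_finset_le _ _
      _ ≤ ∑ _j ∈ Finset.range (m+1), ENNReal.ofReal (1/(4*B*η^2)) := by
          apply Finset.sum_le_sum
          intro j hj
          exact hbadle j (Nat.lt_succ_iff.1 (Finset.mem_range.1 hj))
      _ = (m+1 : ℕ) * ENNReal.ofReal (1/(4*B*η^2)) := by
          rw [Finset.sum_const, Finset.card_range, nsmul_eq_mul]
      _ = ENNReal.ofReal (((m:ℝ)+1) * (1/(4*B*η^2))) := by
          rw [ENNReal.ofReal_mul (by positivity)]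
          congr 1
          rw [← ENNReal.ofReal_natCast (m+1)]
          congr 1
          push_cast; ring
  have hbndα : ((m:ℝ)+1) * (1/(4*B*η^2)) ≤ α := by
    have hα0 := hα.1
    rw [div_le_iff₀ (mul_pos (by positivity) hα0)] at hBbig
    rw [mul_one_div, div_le_iff₀ (by positivity)]
    nlinarith
  have hgood_sub : badUᶜ ⊆ {ω' | cvmStat U B ω' ≤ t₀} := by
    intro ω hω
    simp only [Set.mem_setOf_eq]
    have hkey : ∀ j ≤ m, |ecdf U B ω ((j:ℝ)/m) - (j:ℝ)/m| ≤ η := by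
      intro j hj
      by_contra hcon
      push_neg at hcon
      apply hω
      rw [hbadUdef]
      simp only [Set.mem_iUnion, exists_prop]
      exact ⟨j, Finset.mem_range.2 (Nat.lt_succ_of_le hj), le_of_lt hcon⟩
    calc cvmStat U B ω ≤ (η + 1/m)^2 := cvm_upper U B ω hm hη.le hkey
      _ ≤ (σ/2 + σ/2)^2 := by
          have : η + 1/m ≤ σ/2 + σ/2 := add_le_add le_rfl h1m
          apply pow_le_pow_left₀ (by positivity) this
      _ = σ^2 := by ring
      _ = t₀ := Real.sq_sqrt ht₀.le
  have hmem : 1 - α ≤ (μ' {ω' | cvmStat U B ω' ≤ t₀}).toReal := by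
    have h5 : μ' badUᶜ = 1 - μ' badU := prob_compl_eq_one_sub hbadUmeas
    have h6 : (μ' badU).toReal ≤ α :=
      ENNReal.toReal_le_of_le_ofReal hα.1.le (le_trans hbadUle
        (ENNReal.ofReal_le_ofReal hbndα))
    have h7 : (μ' badUᶜ).toReal = 1 - (μ' badU).toReal := by
      rw [h5, ENNReal.toReal_sub_of_le prob_le_one ENNReal.one_ne_top, ENNReal.toReal_one]
    have h8 : (μ' badUᶜ).toReal ≤ (μ' {ω' | cvmStat U B ω' ≤ t₀}).toReal :=
      ENNReal.toReal_mono (measure_ne_top _ _) (measure_mono hgood_sub)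
    linarith
  -- conclude via csInf
  apply csInf_le
  · refine ⟨0, fun t ht => ?_⟩
    by_contra hneg
    push_neg at hneg
    have : {ω' | cvmStat U B ω' ≤ t} = ∅ := by
      ext ω
      simp only [Set.mem_setOf_eq, Set.mem_empty_iff_false, iff_false, not_le]
      exact lt_of_lt_of_le hneg (cvmStat_nonneg U B ω)
    rw [Set.mem_setOf_eq, this] at ht
    simp at ht
    linarith [hα.2]
  · exact hmem

open ProbabilityTheory in
lemma bind_Iic_eventually {Θ : Type*} [MeasurableSpace Θ] (r : Measure Θ)
    [IsProbabilityMeasure r] (D : Set Θ) (hD : MeasurableSet D) (hw : 0 < r D)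
    (κ : ℕ → Kernel Θ ℝ) (hκ : ∀ n, IsMarkovKernel (κ n))
    (hnull : ∀ n, ∀ θ ∉ D, (κ n) θ = volume.restrict (Set.Icc (0 : ℝ) 1))
    (halt : ∀ θ ∈ D, ∀ ε > (0 : ℝ),
      Tendsto (fun n => (κ n) θ (Set.Icc (0 : ℝ) ε)) atTop (nhds 1)) :
    ∀ᶠ n in atTop, ENNReal.ofReal (1/2 + 5*(r D).toReal/16)
      < (r.bind (fun θ => (κ n) θ)) (Set.Iic (1/2 : ℝ)) := by
  set w := (r D).toReal with hwdef
  have hrD : r D ≠ ⊤ := measure_ne_top r D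
  have hw' : 0 < w := ENNReal.toReal_pos hw.ne' hrD
  have hw1 : w ≤ 1 := by
    calc w ≤ (1 : ℝ≥0∞).toReal := ENNReal.toReal_mono ENNReal.one_ne_top prob_le_one
      _ = 1 := ENNReal.toReal_one
  -- value of the uniform part
  have huni : (volume.restrict (Set.Icc (0:ℝ) 1)) (Set.Iic (1/2:ℝ))
      = ENNReal.ofReal (1/2) := by
    rw [Measure.restrict_apply measurableSet_Iic]
    have : Set.Iic (1/2:ℝ) ∩ Set.Icc 0 1 = Set.Icc 0 (1/2) := by
      ext x
      simp only [Set.mem_inter_iff, Set.mem_Iic, Set.mem_Icc]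
      constructor
      · rintro ⟨h, h0, _⟩; exact ⟨h0, h⟩
      · rintro ⟨h0, h⟩; exact ⟨h, h0, by linarith⟩
    rw [this, Real.volume_Icc]
    norm_num
  -- the D part tends to r D
  set g : ℕ → ℝ≥0∞ := fun n => ∫⁻ θ in D, (κ n) θ (Set.Icc (0:ℝ) (1/2)) ∂r with hgdef
  have hg : Tendsto g atTop (nhds (r D)) := by
    have h1 : Tendsto g atTop (nhds (∫⁻ _ in D, (1:ℝ≥0∞) ∂r)) := by
      apply tendsto_lintegral_of_dominated_convergence (fun _ => (1:ℝ≥0∞))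
      · exact fun n => (κ n).measurable_coe measurableSet_Icc
      · intro n
        filter_upwards with θ
        haveI := hκ n
        exact prob_le_one
      · simp
      · filter_upwards [ae_restrict_mem hD] with θ hθ
        exact halt θ hθ (1/2) (by norm_num)
    have h2 : (∫⁻ _ in D, (1:ℝ≥0∞) ∂r) = r D := by
      rw [lintegral_one, Measure.restrict_apply_univ]
    rwa [h2] at h1
  -- lower bound for the bind measure
  have hlow : ∀ n, g n + ENNReal.ofReal (1/2) * r Dᶜ
      ≤ (r.bind (fun θ => (κ n) θ)) (Set.Iic (1/2 : ℝ)) := by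
    intro n
    rw [Measure.bind_apply measurableSet_Iic (κ n).measurable.aemeasurable]
    rw [← lintegral_add_compl (fun θ => (κ n) θ (Set.Iic (1/2:ℝ))) hD]
    gcongr
    · -- on D
      apply lintegral_mono
      intro θ
      exact measure_mono Set.Icc_subset_Iic_self
    · -- on Dᶜ
      have : ∫⁻ θ in Dᶜ, (κ n) θ (Set.Iic (1/2:ℝ)) ∂r
          = ∫⁻ _ in Dᶜ, ENNReal.ofReal (1/2) ∂r := by
        apply setLIntegral_congr_fun hD.compl
        intro θ hθ
        simp only
        rw [hnull n θ hθ, huni]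
      rw [this, setLIntegral_const]
  -- the limit is strictly bigger than the target
  have hlim : Tendsto (fun n => g n + ENNReal.ofReal (1/2) * r Dᶜ) atTop
      (nhds (r D + ENNReal.ofReal (1/2) * r Dᶜ)) :=
    hg.add_const _
  have hL : r D + ENNReal.ofReal (1/2) * r Dᶜ = ENNReal.ofReal (w + (1/2)*(1-w)) := by
    have hc : r Dᶜ = 1 - r D := prob_compl_eq_one_sub hD
    have hrDw : r D = ENNReal.ofReal w := (ENNReal.ofReal_toReal hrD).symm
    rw [hc, hrDw, ENNReal.ofReal_add (by linarith) (by nlinarith), ENNReal.ofReal_mul (by norm_num)]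
    congr 1
    rw [ENNReal.ofReal_sub 1 (by linarith), ENNReal.ofReal_one]
  have hstrict : ENNReal.ofReal (1/2 + 5*w/16) < r D + ENNReal.ofReal (1/2) * r Dᶜ := by
    rw [hL]
    apply (ENNReal.ofReal_lt_ofReal_iff (by nlinarith)).2
    nlinarith
  filter_upwards [hlim.eventually (eventually_gt_nhds hstrict)] with n hn
  exact lt_of_lt_of_le hn (hlow n)

/-- **Corollary 1, Cramér–von Mises version: consistency of the global test.**
Let `r` be a probability measure on the parameter space `Θ` and `D ⊆ Θ` with
`r(D) > 0` (Assumption 1).  For each `n`, the Markov kernel `κ n` of local `p`-values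
is uniform on `[0,1]` off `D` and concentrates at `0` on `D` as `n → ∞` (Assumption 2).
If `p n 1, …, p n B` are (i.i.d.) local `p`-values, whose common law is the mixture
`r.bind (κ n)` obtained by drawing `θ_i ~ r` and then `p_i ~ κ n θ_i`, if
`W_{B,n}` is their Cramér–von Mises statistic against the uniform distribution, and
if `c B` is the `(1-α)`-quantile of the CvM statistic of `B` i.i.d. `Unif[0,1]`
variables, then for all sequences `B_k → ∞` and `n_k → ∞` the probability of rejection
`P(W_{B_k,n_k} > c_{B_k})` tends to `1`. -/
theorem global_cvm_test_consistent
    {Θ : Type*} [MeasurableSpace Θ] (r : Measure Θ) [IsProbabilityMeasure r]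
    (D : Set Θ) (hD : MeasurableSet D) (hw : 0 < r D)
    (κ : ℕ → ProbabilityTheory.Kernel Θ ℝ)
    (hκ : ∀ n, ProbabilityTheory.IsMarkovKernel (κ n))
    (hnull : ∀ n, ∀ θ ∉ D, (κ n) θ = volume.restrict (Set.Icc (0 : ℝ) 1))
    (halt : ∀ θ ∈ D, ∀ ε > (0 : ℝ),
      Tendsto (fun n => (κ n) θ (Set.Icc (0 : ℝ) ε)) atTop (nhds 1))
    {Ω : Type*} [MeasurableSpace Ω] (μ : Measure Ω) [IsProbabilityMeasure μ]
    (p : ℕ → ℕ → Ω → ℝ) (hpmeas : ∀ n i, Measurable (p n i))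
    (hpindep : ∀ n, ProbabilityTheory.iIndepFun (p n) μ)
    (hplaw : ∀ n i, μ.map (p n i) = r.bind (fun θ => (κ n) θ))
    {Ω' : Type*} [MeasurableSpace Ω'] (μ' : Measure Ω') [IsProbabilityMeasure μ']
    (U : ℕ → Ω' → ℝ) (hUmeas : ∀ i, Measurable (U i))
    (hUindep : ProbabilityTheory.iIndepFun U μ')
    (hUlaw : ∀ i, μ'.map (U i) = volume.restrict (Set.Icc (0 : ℝ) 1))
    (α : ℝ) (hα : α ∈ Set.Ioo (0 : ℝ) 1)
    (c : ℕ → ℝ)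
    (hc : ∀ B, c B = sInf {t : ℝ | 1 - α ≤ (μ' {ω' | cvmStat U B ω' ≤ t}).toReal})
    (Bk nk : ℕ → ℕ) (hBk : Tendsto Bk atTop atTop) (hnk : Tendsto nk atTop atTop) :
    Tendsto (fun j => μ {ω | c (Bk j) < cvmStat (p (nk j)) (Bk j) ω}) atTop
      (nhds 1) := by
  classical
  set w := (r D).toReal with hwdef
  have hw' : 0 < w := ENNReal.toReal_pos hw.ne' (measure_ne_top r D)
  have hw1 : w ≤ 1 := by
    calc w ≤ (1 : ℝ≥0∞).toReal := ENNReal.toReal_mono ENNReal.one_ne_top prob_le_one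
      _ = 1 := ENNReal.toReal_one
  set δ : ℝ := w/4 with hδdef
  have hδ : 0 < δ := by positivity
  set η : ℝ := w/16 with hηdef
  have hη : 0 < η := by positivity
  set t₀ : ℝ := w^3/1024 with ht₀def
  have ht₀ : 0 < t₀ := by positivity
  obtain ⟨B₀, hB₀⟩ := quantile_small hUmeas hUindep hUlaw hα ht₀
  have hcB : ∀ B, B₀ ≤ B → c B ≤ t₀ := by
    intro B hB
    rw [hc B]
    exact hB₀ B hB
  have hev1 : ∀ᶠ j in atTop, max B₀ 1 ≤ Bk j := hBk.eventually (eventually_ge_atTop _)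
  have hev2 : ∀ᶠ j in atTop, ENNReal.ofReal (1/2 + 5*w/16)
      < (r.bind (fun θ => (κ (nk j)) θ)) (Set.Iic (1/2 : ℝ)) :=
    hnk.eventually (bind_Iic_eventually r D hD hw κ hκ hnull halt)
  have key : ∀ᶠ j in atTop, 1 - ENNReal.ofReal (1/(4 * (Bk j) * η^2))
      ≤ μ {ω | c (Bk j) < cvmStat (p (nk j)) (Bk j) ω} := by
    filter_upwards [hev1, hev2] with j hj1 hj2
    set B := Bk j with hBdef
    set n := nk j with hndef
    have hB1 : 0 < B := le_trans (le_max_right _ _) hj1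
    have hbindle : (r.bind (fun θ => (κ n) θ)) (Set.Iic (1/2 : ℝ)) ≤ 1 := by
      rw [Measure.bind_apply measurableSet_Iic (κ n).measurable.aemeasurable]
      calc ∫⁻ θ, (κ n) θ (Set.Iic (1/2:ℝ)) ∂r ≤ ∫⁻ _, 1 ∂r := by
            apply lintegral_mono
            intro θ
            haveI := hκ n
            exact prob_le_one
        _ = 1 := by simp
    have hbindne : (r.bind (fun θ => (κ n) θ)) (Set.Iic (1/2 : ℝ)) ≠ ⊤ :=
      ne_top_of_le_ne_top ENNReal.one_ne_top hbindle
    set q : ℝ := ((r.bind (fun θ => (κ n) θ)) (Set.Iic (1/2 : ℝ))).toReal with hqdef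
    have hq : 1/2 + 5*w/16 < q :=
      (ENNReal.ofReal_lt_iff_lt_toReal (by positivity) hbindne).1 hj2
    have hqlaw : ∀ i, (μ {ω | p n i ω ≤ 1/2}).toReal = q := by
      intro i
      have h1 : {ω | p n i ω ≤ (1/2:ℝ)} = p n i ⁻¹' Set.Iic (1/2) := rfl
      rw [h1, ← Measure.map_apply (hpmeas n i) measurableSet_Iic, hplaw n i]
    have hcheb := ecdf_chebyshev (hpmeas n) (hpindep n) hB1 (1/2 : ℝ) hqlaw hη
    set bad : Set Ω := {ω | η ≤ |ecdf (p n) B ω (1/2) - q|} with hbaddef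
    have hbadmeas : MeasurableSet bad :=
      measurableSet_le measurable_const
        (((measurable_ecdf (hpmeas n) B (1/2)).sub measurable_const).abs)
    have hsub : badᶜ ⊆ {ω | c B < cvmStat (p n) B ω} := by
      intro ω hω
      simp only [hbaddef, Set.mem_compl_iff, Set.mem_setOf_eq, not_le] at hω
      have habs := abs_lt.1 hω
      have hecdf : 1/2 + δ ≤ ecdf (p n) B ω (1/2) := by
        rw [hδdef]
        linarith [habs.1]
      have hlow := cvm_lower (p n) B ω (by norm_num : (0:ℝ) ≤ 1/2) hδ
        (by rw [hδdef]; linarith) hecdf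
      simp only [Set.mem_setOf_eq]
      calc c B ≤ t₀ := hcB B (le_trans (le_max_left _ _) hj1)
        _ < δ^3/8 := by rw [ht₀def, hδdef]; nlinarith
        _ ≤ cvmStat (p n) B ω := hlow
    calc 1 - ENNReal.ofReal (1/(4 * B * η^2)) ≤ 1 - μ bad := tsub_le_tsub_left hcheb 1
      _ = μ badᶜ := (prob_compl_eq_one_sub hbadmeas).symm
      _ ≤ μ {ω | c B < cvmStat (p n) B ω} := measure_mono hsub
  have hup : ∀ j, μ {ω | c (Bk j) < cvmStat (p (nk j)) (Bk j) ω} ≤ 1 :=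
    fun j => prob_le_one
  have hlowtend : Tendsto (fun j => 1 - ENNReal.ofReal (1/(4 * (Bk j) * η^2))) atTop
      (nhds 1) := by
    have hcast : Tendsto (fun j => ((Bk j : ℕ) : ℝ)) atTop atTop :=
      tendsto_natCast_atTop_atTop.comp hBk
    have hre : Tendsto (fun j => 1/(4 * ((Bk j : ℕ) : ℝ) * η^2)) atTop (nhds 0) := by
      have h1 : (fun j => 1/(4 * ((Bk j : ℕ) : ℝ) * η^2))
          = fun j => (1/(4*η^2)) * (((Bk j : ℕ) : ℝ))⁻¹ := by
        funext j
        simp [one_div, mul_inv]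
        ring
      rw [h1]
      have := (tendsto_inv_atTop_zero.comp hcast).const_mul (1/(4*η^2))
      simpa using this
    have h0 : Tendsto (fun j => ENNReal.ofReal (1/(4 * ((Bk j : ℕ) : ℝ) * η^2))) atTop
        (nhds 0) := by
      rw [← ENNReal.ofReal_zero]
      exact ENNReal.tendsto_ofReal hre
    have := ENNReal.Tendsto.sub (tendsto_const_nhds : Tendsto (fun _ : ℕ => (1:ℝ≥0∞)) atTop (nhds 1))
      h0 (Or.inl ENNReal.one_ne_top)
    simpa using this
  exact tendsto_of_tendsto_of_tendsto_of_le_of_le' hlowtend tendsto_const_nhds key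
    (Eventually.of_forall hup)
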